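/- Let F be a field of characteristic ≠ 2 and R a simple associative unital F-algebra with an involution * of the first kind, with S ⊊ R, and assume S is not a commutative set (there exist a, b ∈ S with ab ≠ ba). Then the following are equivalent: (1) there exist x, y ∈ S such that xy + yx ≠ 0 and xky ∈ S² for every k ∈ K; (2) S² = R. -/

import Mathlib

/-- Second criterion: there exist `x, y ∈ S` with `xy + yx ≠ 0` and `xKy ⊆ S²`
iff `S² = R`. -/
theorem stmt_11 (F R : Type*) [Field F] [Ring R] [Algebra F R] [StarRing R]
    [IsSimpleRing R]
    (hchar : (2 : F) ≠ 0)
    (hfirst : Set.center R ⊆ {r : R | star r = r})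
    (hproper : {r : R | star r = r} ≠ Set.univ)
    (hnc : ∃ a ∈ {r : R | star r = r}, ∃ b ∈ {r : R | star r = r}, a * b ≠ b * a) :
    (∃ x ∈ {r : R | star r = r}, ∃ y ∈ {r : R | star r = r},
      x * y + y * x ≠ 0 ∧
      ∀ k ∈ {r : R | star r = -r}, x * k * y ∈
        AddSubgroup.closure {z : R | ∃ a ∈ {r : R | star r = r},
          ∃ b ∈ {r : R | star r = r}, z = a * b}) ↔
    (AddSubgroup.closure {z : R | ∃ a ∈ {r : R | star r = r},
        ∃ b ∈ {r : R | star r = r}, z = a * b} : Set R) = Set.univ := by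
  set L : AddSubgroup R := AddSubgroup.closure {z : R | ∃ a ∈ {r : R | star r = r},
        ∃ b ∈ {r : R | star r = r}, z = a * b} with hLdef
  -- star commutes with scalars (involution of the first kind)
  have hcen : ∀ c : F, star (algebraMap F R c) = algebraMap F R c := by
    intro c
    exact hfirst (Semigroup.mem_center_iff.mpr fun g => (Algebra.commutes c g).symm)
  have hstsm : ∀ (c : F) (v : R), star (c • v) = c • star v := by
    intro c v
    rw [Algebra.smul_def, Algebra.smul_def, star_mul, hcen c]
    exact (Algebra.commutes c (star v)).symm
  have halfsplit : ∀ u v : R, (2:F)⁻¹ • (u + v) + (2:F)⁻¹ • (u - v) = u := by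
    intro u v
    rw [← smul_add]
    have h1 : (u + v) + (u - v) = (2:F) • u := by rw [two_smul]; abel
    rw [h1, smul_smul, inv_mul_cancel₀ hchar, one_smul]
  have hdecomp : ∀ r : R, ∃ σ κ : R, star σ = σ ∧ star κ = -κ ∧ σ + κ = r := by
    intro r
    refine ⟨(2:F)⁻¹ • (r + star r), (2:F)⁻¹ • (r - star r), ?_, ?_, halfsplit r (star r)⟩
    · rw [hstsm, star_add, star_star, add_comm]
    · rw [hstsm, star_sub, star_star, ← smul_neg]
      congr 1
      abel
  -- generators
  have hgen : ∀ a b : R, star a = a → star b = b → a * b ∈ L := by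
    intro a b ha hb
    exact AddSubgroup.subset_closure ⟨a, ha, b, hb, rfl⟩
  have hSmemL : ∀ s : R, star s = s → s ∈ L := by
    intro s hs
    have := hgen s 1 hs (star_one R)
    rwa [mul_one] at this
  have hsmulL : ∀ (c : F) (v : R), v ∈ L → c • v ∈ L := by
    intro c v hv
    induction hv using AddSubgroup.closure_induction with
    | mem z hz =>
      obtain ⟨a, ha, b, hb, rfl⟩ := hz
      rw [← smul_mul_assoc]
      exact hgen _ b (by rw [hstsm, ha]) hb
    | zero => rw [smul_zero]; exact zero_mem L
    | add p q hp hq ihp ihq => rw [smul_add]; exact add_mem ihp ihq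
    | neg p hp ih => rw [smul_neg]; exact neg_mem ih
  have hstarL : ∀ v : R, v ∈ L → star v ∈ L := by
    intro v hv
    induction hv using AddSubgroup.closure_induction with
    | mem z hz =>
      obtain ⟨a, ha, b, hb, rfl⟩ := hz
      rw [star_mul, ha, hb]
      exact hgen b a hb ha
    | zero => rw [star_zero]; exact zero_mem L
    | add p q hp hq ihp ihq => rw [star_add]; exact add_mem ihp ihq
    | neg p hp ih => rw [star_neg]; exact neg_mem ih
  -- [S, K] ⊆ S
  have hSK : ∀ s k : R, star s = s → star k = -k → star (s*k - k*s) = s*k - k*s := by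
    intro s k hs hk
    rw [star_sub, star_mul, star_mul, hs, hk]
    noncomm_ring
  -- [S, S] ⊆ K
  have hSSk : ∀ a b : R, star a = a → star b = b → star (a*b - b*a) = -(a*b - b*a) := by
    intro a b ha hb
    rw [star_sub, star_mul, star_mul, ha, hb]
    noncomm_ring
  -- [S, R] ⊆ L
  have hD : ∀ s r : R, star s = s → s * r - r * s ∈ L := by
    intro s r hs
    obtain ⟨σ, κ, hσ, hκ, rfl⟩ := hdecomp r
    have key : s * (σ + κ) - (σ + κ) * s = (s*σ - σ*s) + (s*κ - κ*s) := by noncomm_ring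
    rw [key]
    exact add_mem (sub_mem (hgen s σ hs hσ) (hgen σ s hσ hs)) (hSmemL _ (hSK s κ hs hκ))
  -- [[S,S], R] ⊆ L  (Jacobi)
  have hE : ∀ a b r : R, star a = a → star b = b →
      (a*b - b*a)*r - r*(a*b - b*a) ∈ L := by
    intro a b r ha hb
    obtain ⟨σ, κ, hσ, hκ, rfl⟩ := hdecomp r
    have key : (a*b - b*a)*(σ + κ) - (σ + κ)*(a*b - b*a) =
        (-((b*(a*σ - σ*a) - (a*σ - σ*a)*b)) + (a*(b*σ - σ*b) - (b*σ - σ*b)*a))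
        + (((a*κ - κ*a)*b - b*(a*κ - κ*a)) + (a*(b*κ - κ*b) - (b*κ - κ*b)*a)) := by
      noncomm_ring
    rw [key]
    refine add_mem (add_mem ?_ ?_) (add_mem ?_ ?_)
    · exact neg_mem (hSmemL _ (hSK b (a*σ - σ*a) hb (hSSk a σ ha hσ)))
    · exact hSmemL _ (hSK a (b*σ - σ*b) ha (hSSk b σ hb hσ))
    · have hp : star (a*κ - κ*a) = a*κ - κ*a := hSK a κ ha hκ
      exact sub_mem (hgen _ b hp hb) (hgen b _ hb hp)
    · have hq : star (b*κ - κ*b) = b*κ - κ*b := hSK b κ hb hκ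
      exact sub_mem (hgen a _ ha hq) (hgen _ a hq ha)
  -- L is a Lie ideal: [L, R] ⊆ L
  have hLie : ∀ v : R, v ∈ L → ∀ r : R, v * r - r * v ∈ L := by
    intro v hv
    induction hv using AddSubgroup.closure_induction with
    | mem z hz =>
      intro r
      obtain ⟨a, ha, b, hb, rfl⟩ := hz
      have hsp := halfsplit (a*b) (b*a)
      set p : R := (2:F)⁻¹ • (a*b + b*a) with hpdef
      set q : R := (2:F)⁻¹ • (a*b - b*a) with hqdef
      have hp : star p = p := by
        rw [hpdef, hstsm, star_add, star_mul, star_mul, ha, hb, add_comm]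
      have key : a*b*r - r*(a*b) = (p*r - r*p) + (q*r - r*q) := by
        rw [← hsp]; noncomm_ring
      have hq : q*r - r*q = (2:F)⁻¹ • ((a*b - b*a)*r - r*(a*b - b*a)) := by
        rw [hqdef, smul_mul_assoc, mul_smul_comm, ← smul_sub]
      rw [key, hq]
      exact add_mem (hD p r hp) (hsmulL _ _ (hE a b r ha hb))
    | zero => intro r; simpa using zero_mem L
    | add p q hp hq ihp ihq =>
      intro r
      have key : (p+q)*r - r*(p+q) = (p*r - r*p) + (q*r - r*q) := by noncomm_ring
      rw [key]; exact add_mem (ihp r) (ihq r)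
    | neg p hp ih =>
      intro r
      have key : (-p)*r - r*(-p) = -(p*r - r*p) := by noncomm_ring
      rw [key]; exact neg_mem (ih r)
  constructor
  · rintro ⟨x, hx, y, hy, hu0, hxky⟩
    simp only [Set.mem_setOf_eq] at hx hy
    have hxky' : ∀ k : R, star k = -k → x*k*y ∈ L := by
      intro k hk
      exact hxky k hk
    set u : R := x*y + y*x with hudef
    have hu_sym : star u = u := by
      rw [hudef, star_add, star_mul, star_mul, hx, hy, add_comm]
    have hyKx : ∀ k : R, star k = -k → y*k*x ∈ L := by
      intro k hk
      have h1 := hstarL _ (hxky' k hk)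
      rw [star_mul, star_mul, hy, hk, hx] at h1
      have key : y*k*x = -(y * (-k * x)) := by noncomm_ring
      rw [key]; exact neg_mem h1
    have hkyx : ∀ k : R, star k = -k → k*(y*x) ∈ L := by
      intro k hk
      have key : k*(y*x) = x*k*y - (x*(k*y) - (k*y)*x) := by noncomm_ring
      rw [key]; exact sub_mem (hxky' k hk) (hD x (k*y) hx)
    have hkxy : ∀ k : R, star k = -k → k*(x*y) ∈ L := by
      intro k hk
      have key : k*(x*y) = y*k*x - (y*(k*x) - (k*x)*y) := by noncomm_ring
      rw [key]; exact sub_mem (hyKx k hk) (hD y (k*x) hy)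
    have hKu : ∀ k : R, star k = -k → k*u ∈ L := by
      intro k hk
      have key : k*u = k*(x*y) + k*(y*x) := by rw [hudef]; noncomm_ring
      rw [key]; exact add_mem (hkxy k hk) (hkyx k hk)
    have huR : ∀ r : R, u*r ∈ L := by
      intro r
      obtain ⟨σ, κ, hσ, hκ, rfl⟩ := hdecomp r
      rw [mul_add]
      refine add_mem (hgen u σ hu_sym hσ) ?_
      have key : u*κ = κ*u + (u*κ - κ*u) := by noncomm_ring
      rw [key]
      exact add_mem (hKu κ hκ) (hSmemL _ (hSK u κ hu_sym hκ))
    have hRuR : ∀ a b : R, a*u*b ∈ L := by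
      intro a b
      have h2 := hLie (u*b) (huR b) a
      have key : a*u*b = u*(b*a) - ((u*b)*a - a*(u*b)) := by noncomm_ring
      rw [key]; exact sub_mem (huR (b*a)) h2
    let J : TwoSidedIdeal R := TwoSidedIdeal.mk' {v : R | ∀ a b : R, a*v*b ∈ L}
      (by intro a b; simpa using zero_mem L)
      (by intro p q hp hq a b
          have key : a*(p+q)*b = a*p*b + a*q*b := by noncomm_ring
          rw [key]; exact add_mem (hp a b) (hq a b))
      (by intro p hp a b
          have key : a*(-p)*b = -(a*p*b) := by noncomm_ring
          rw [key]; exact neg_mem (hp a b))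
      (by intro p q hq a b
          have key : a*(p*q)*b = (a*p)*q*b := by noncomm_ring
          rw [key]; exact hq (a*p) b)
      (by intro p q hp a b
          have key : a*(p*q)*b = a*p*(q*b) := by noncomm_ring
          rw [key]; exact hp a (q*b))
    have huJ : u ∈ J := by
      rw [TwoSidedIdeal.mem_mk']
      exact hRuR
    have hJtop : J = ⊤ := by
      rcases eq_bot_or_eq_top J with h | h
      · exfalso
        rw [h, TwoSidedIdeal.mem_bot] at huJ
        exact hu0 huJ
      · exact h
    have hone : (1:R) ∈ J := by rw [hJtop]; exact TwoSidedIdeal.mem_top R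
    rw [TwoSidedIdeal.mem_mk'] at hone
    refine Set.eq_univ_of_forall fun r => ?_
    have := hone r 1
    simpa using this
  · intro h
    refine ⟨1, star_one R, 1, star_one R, ?_, ?_⟩
    · intro hcontra
      have h2 : ((2:F) • (1:R)) = 0 := by
        rw [two_smul]
        calc (1:R) + 1 = 1*1 + 1*1 := by noncomm_ring
          _ = 0 := hcontra
      have h3 : ((2:F)⁻¹ * 2) • (1:R) = 0 := by rw [mul_smul, h2, smul_zero]
      rw [inv_mul_cancel₀ hchar, one_smul] at h3
      exact one_ne_zero h3
    · intro k hk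
      have := Set.eq_univ_iff_forall.mp h ((1:R)*k*1)
      exact this
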